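/- Let e ≥ 2 and let λ be a partition with at most r parts, with r-beta numbers β₁ > β₂ > ⋯ > β_r ≥ 0. For 1 ≤ i ≤ r−1 set x_i = β_i − β_{i+1} and m_i = ⌈x_i / e⌉. Then the e-weight of λ satisfies w_e(λ) ≥ ∑_{i=1}^{r−1} i·(m_i − 1). -/

import Mathlib

/-- The e-weight of a partition with at most r parts, given by its r-beta
numbers `β 0 > β 1 > ⋯ > β (r-1)`: the total number of rows of beads minus the
minimal possible total after making every runner flush. -/
def eWeight (e r : ℕ) (β : ℕ → ℕ) : ℕ :=
  (∑ i ∈ Finset.range r, β i / e) -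
    ∑ b ∈ Finset.range e,
      Nat.choose ((Finset.range r).filter fun i => β i % e = b).card 2

/-- Key arithmetic step: counting members of a residue class below `b` versus
below `a`, across a gap from `a` to `b`. -/
lemma keyA (e s a b : ℕ) (he : 0 < e) (hs : s < e) (hab : a < b) :
    (b - a - 1) / e + (if a % e = s then 1 else 0) + (a - s + e - 1) / e
      ≤ (b - s + e - 1) / e := by
  by_cases h : a % e = s
  · have hs' : s ≤ a := h ▸ Nat.mod_le a e
    have ha : a - s = e * (a / e) := by
      have := Nat.div_add_mod a e
      omega
    have h1 : (a - s + e - 1) / e = a / e := by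
      have h1' : a - s + e - 1 = e * (a / e) + (e - 1) := by omega
      rw [h1', Nat.mul_add_div he, Nat.div_eq_of_lt (show e - 1 < e by omega),
        Nat.add_zero]
    have h2 : b - s + e - 1 = (b - a - 1) + e * (a / e + 1) := by
      rw [Nat.mul_add, ← ha, Nat.mul_one]
      omega
    rw [if_pos h, h1, h2, Nat.add_mul_div_left _ _ he]
    omega
  · rw [if_neg h]
    by_cases hs' : s ≤ a
    · have h1 := Nat.add_div_le_add_div (b - a - 1) (a - s + e - 1) e
      have h2 : (b - a - 1) + (a - s + e - 1) ≤ b - s + e - 1 := by omega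
      have h3 := Nat.div_le_div_right (c := e) h2
      omega
    · have h0 : a - s + e - 1 < e := by omega
      rw [Nat.div_eq_of_lt h0]
      have h2 : b - a - 1 ≤ b - s + e - 1 := by omega
      have h3 := Nat.div_le_div_right (c := e) h2
      omega

/-- For a finite set of naturals, summing the number of strictly larger
elements over all elements gives `card choose 2`. -/
lemma sum_card_filter_lt_aux : ∀ (n : ℕ) (s : Finset ℕ), s.card = n →
    ∑ j ∈ s, ((s.filter fun k => j < k).card) = s.card.choose 2 := by
  intro n
  induction n with
  | zero =>
    intro s hn
    rw [Finset.card_eq_zero] at hn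
    subst hn; simp
  | succ n ih =>
    intro s hn
    have hne : s.Nonempty := Finset.card_pos.mp (by omega)
    set m := s.min' hne with hm
    have hmem : m ∈ s := s.min'_mem hne
    have hins : s = insert m (s.erase m) := (Finset.insert_erase hmem).symm
    have hcard : (s.erase m).card = n := by
      rw [Finset.card_erase_of_mem hmem]; omega
    have hfm : s.filter (fun k => m < k) = s.erase m := by
      ext k
      simp only [Finset.mem_filter, Finset.mem_erase]
      constructor
      · rintro ⟨hk, hlt⟩; exact ⟨by omega, hk⟩
      · rintro ⟨hk, hks⟩
        refine ⟨hks, lt_of_le_of_ne (s.min'_le k hks) (Ne.symm hk)⟩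
    have hfj : ∀ j ∈ s.erase m,
        (s.filter fun k => j < k) = ((s.erase m).filter fun k => j < k) := by
      intro j hj
      have hjm : m < j := lt_of_le_of_ne (s.min'_le j (Finset.mem_of_mem_erase hj))
        (Ne.symm (Finset.ne_of_mem_erase hj))
      ext k
      simp only [Finset.mem_filter, Finset.mem_erase]
      constructor
      · rintro ⟨hk, hlt⟩; exact ⟨⟨by omega, hk⟩, hlt⟩
      · rintro ⟨⟨_, hk⟩, hlt⟩; exact ⟨hk, hlt⟩
    rw [hins, Finset.sum_insert (Finset.notMem_erase m s)]
    rw [← hins, hfm]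
    have : ∑ j ∈ s.erase m, ((s.filter fun k => j < k).card)
        = ∑ j ∈ s.erase m, (((s.erase m).filter fun k => j < k).card) :=
      Finset.sum_congr rfl (fun j hj => by rw [hfj j hj])
    rw [this, ih _ hcard, hcard, hn, Nat.choose_succ_succ n 1,
      Nat.choose_one_right]

lemma sum_card_filter_lt (s : Finset ℕ) :
    ∑ j ∈ s, ((s.filter fun k => j < k).card) = s.card.choose 2 :=
  sum_card_filter_lt_aux s.card s rfl

/-- The per-index counting claim, proved by descending induction along the
chain of beta numbers. -/
lemma chain_bound (e r : ℕ) (he : 0 < e) (β : ℕ → ℕ)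
    (hβ : ∀ i j, i < j → j < r → β j < β i) (s : ℕ) (hs : s < e) :
    ∀ t l, l + t = r - 1 →
      (∑ i ∈ Finset.Ico l (r - 1), (β i - β (i + 1) - 1) / e) +
        ((Finset.Ico (l + 1) r).filter fun k => β k % e = s).card
        ≤ (β l - s + e - 1) / e := by
  intro t
  induction t with
  | zero =>
    intro l hl
    have h1 : Finset.Ico l (r - 1) = ∅ := Finset.Ico_eq_empty (by omega)
    have h2 : Finset.Ico (l + 1) r = ∅ := Finset.Ico_eq_empty (by omega)
    rw [h1, h2]; simp
  | succ t ih =>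
    intro l hl
    have hl1 : l + 1 < r := by omega
    have hlr : l < r - 1 := by omega
    have hab : β (l + 1) < β l := hβ l (l + 1) (by omega) hl1
    have hsum : ∑ i ∈ Finset.Ico l (r - 1), (β i - β (i + 1) - 1) / e
        = (β l - β (l + 1) - 1) / e
          + ∑ i ∈ Finset.Ico (l + 1) (r - 1), (β i - β (i + 1) - 1) / e :=
      Finset.sum_eq_sum_Ico_succ_bot hlr _
    have hIco : Finset.Ico (l + 1) r = insert (l + 1) (Finset.Ico (l + 1 + 1) r) :=
      (Finset.insert_Ico_add_one_left_eq_Ico hl1).symm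
    have hcard : ((Finset.Ico (l + 1) r).filter fun k => β k % e = s).card
        = (if β (l + 1) % e = s then 1 else 0)
          + ((Finset.Ico (l + 1 + 1) r).filter fun k => β k % e = s).card := by
      rw [hIco, Finset.filter_insert]
      by_cases h : β (l + 1) % e = s
      · rw [if_pos h, if_pos h, Finset.card_insert_of_notMem]
        · omega
        · intro hmem
          have := Finset.mem_of_mem_filter _ hmem
          simp at this
      · rw [if_neg h, if_neg h]
        omega
    have hIH := ih (l + 1) (by omega)
    have hkey := keyA e s (β (l + 1)) (β l) he hs hab
    rw [hsum, hcard]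
    omega

theorem eWeight_lower_bound (e r : ℕ) (he : 2 ≤ e) (β : ℕ → ℕ)
    (hβ : ∀ i j, i < j → j < r → β j < β i) :
    ∑ i ∈ Finset.range (r - 1),
      (i + 1) * ((β i - β (i + 1) + e - 1) / e - 1) ≤ eWeight e r β := by
  have he0 : 0 < e := by omega
  rw [eWeight]
  apply Nat.le_sub_of_add_le
  -- Step 1: rewrite each summand as (x - 1) / e
  have hconv : ∀ i ∈ Finset.range (r - 1),
      (i + 1) * ((β i - β (i + 1) + e - 1) / e - 1)
        = (i + 1) * ((β i - β (i + 1) - 1) / e) := by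
    intro i hi
    have hi' : i < r - 1 := Finset.mem_range.mp hi
    have hx : 1 ≤ β i - β (i + 1) := by
      have := hβ i (i + 1) (by omega) (by omega)
      omega
    have h1 : β i - β (i + 1) + e - 1 = (β i - β (i + 1) - 1) + e := by omega
    rw [h1, Nat.add_div_right _ he0, Nat.add_sub_cancel]
  rw [Finset.sum_congr rfl hconv]
  -- Step 2: swap sums: ∑ i (i+1) * g i = ∑ j ∑_{i ∈ Ico j (r-1)} g i
  have hswap : ∑ i ∈ Finset.range (r - 1), (i + 1) * ((β i - β (i + 1) - 1) / e)
      = ∑ j ∈ Finset.range (r - 1), ∑ i ∈ Finset.Ico j (r - 1),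
          (β i - β (i + 1) - 1) / e := by
    rw [Finset.sum_comm' (s' := fun i => Finset.range (i + 1))
      (t' := Finset.range (r - 1)) (f := fun _ i => (β i - β (i + 1) - 1) / e)
      (fun j i => by
        simp only [Finset.mem_range, Finset.mem_Ico]
        omega)]
    apply Finset.sum_congr rfl
    intro i _
    rw [Finset.sum_const, Finset.card_range, smul_eq_mul]
  rw [hswap]
  -- Step 3: the choose-2 sum counts pairs with equal residues
  have hchoose : ∑ b ∈ Finset.range e,
      Nat.choose ((Finset.range r).filter fun i => β i % e = b).card 2
      = ∑ j ∈ Finset.range r,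
          ((Finset.Ico (j + 1) r).filter fun k => β k % e = β j % e).card := by
    have h1 : ∀ b ∈ Finset.range e,
        Nat.choose ((Finset.range r).filter fun i => β i % e = b).card 2
        = ∑ j ∈ (Finset.range r).filter (fun i => β i % e = b),
            ((((Finset.range r).filter fun i => β i % e = b).filter
              fun k => j < k).card) := by
      intro b _
      rw [sum_card_filter_lt]
    rw [Finset.sum_congr rfl h1]
    have h2 : ∀ b ∈ Finset.range e, ∀ j ∈ (Finset.range r).filter (fun i => β i % e = b),
        ((((Finset.range r).filter fun i => β i % e = b).filter
            fun k => j < k).card)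
        = ((Finset.Ico (j + 1) r).filter fun k => β k % e = β j % e).card := by
      intro b _ j hj
      rw [Finset.mem_filter] at hj
      congr 1
      ext k
      simp only [Finset.mem_filter, Finset.mem_range, Finset.mem_Ico]
      constructor
      · rintro ⟨⟨hk, hkb⟩, hlt⟩
        exact ⟨⟨by omega, hk⟩, by rw [hkb, hj.2]⟩
      · rintro ⟨⟨hjk, hk⟩, hkb⟩
        exact ⟨⟨hk, by rw [hkb, hj.2]⟩, by omega⟩
    rw [Finset.sum_congr rfl (fun b hb => Finset.sum_congr rfl (h2 b hb))]
    exact Finset.sum_fiberwise_of_maps_to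
      (fun i _ => Finset.mem_range.mpr (Nat.mod_lt _ he0)) _
  rw [hchoose]
  -- Step 4: extend the first sum from range (r-1) to range r and combine
  have hsub : ∑ j ∈ Finset.range (r - 1), ∑ i ∈ Finset.Ico j (r - 1),
      (β i - β (i + 1) - 1) / e
      ≤ ∑ j ∈ Finset.range r, ∑ i ∈ Finset.Ico j (r - 1),
          (β i - β (i + 1) - 1) / e :=
    Finset.sum_le_sum_of_subset (Finset.range_subset_range.mpr (by omega))
  refine le_trans (Nat.add_le_add_right hsub _) ?_
  rw [← Finset.sum_add_distrib]
  apply Finset.sum_le_sum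
  intro j hj
  have hjr : j < r := Finset.mem_range.mp hj
  have hb := chain_bound e r he0 β hβ (β j % e) (Nat.mod_lt _ he0)
    (r - 1 - j) j (by omega)
  have heq : (β j - β j % e + e - 1) / e = β j / e := by
    have hmod := Nat.div_add_mod (β j) e
    have h1 : β j - β j % e + e - 1 = e * (β j / e) + (e - 1) := by omega
    rw [h1, Nat.mul_add_div he0, Nat.div_eq_of_lt (show e - 1 < e by omega),
      Nat.add_zero]
  rw [heq] at hb
  exact hb
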